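/- Let {Ψ_n} be a sequence of continuous conical concave functions E → ℝ with Ψ_n(x) ≤ Ψ_{n+1}(x) for all n and x. Then there exists a continuous conical concave function Ψ : E → ℝ such that Ψ_n → Ψ in the C-norm (equivalently, uniformly on the closed unit ball). -/

import Mathlib

open Set

noncomputable section

/-- `f` is conical: positively homogeneous of degree 1. -/
def Conical (d : ℕ) (f : EuclideanSpace ℝ (Fin d) → ℝ) : Prop :=
  ∀ c : ℝ, 0 ≤ c → ∀ x, f (c • x) = c * f x

/-- Every increasing sequence of continuous conical concave functions converges in the
C-norm to a continuous conical concave function. -/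
theorem stmt_12 (d : ℕ) (hd : 1 ≤ d)
    (Ψn : ℕ → EuclideanSpace ℝ (Fin d) → ℝ)
    (hc : ∀ n, Continuous (Ψn n)) (hcon : ∀ n, Conical d (Ψn n))
    (hcv : ∀ n, ConcaveOn ℝ Set.univ (Ψn n))
    (hmono : ∀ n x, Ψn n x ≤ Ψn (n + 1) x) :
    ∃ Ψ : EuclideanSpace ℝ (Fin d) → ℝ,
      Continuous Ψ ∧ Conical d Ψ ∧ ConcaveOn ℝ Set.univ Ψ ∧
        ∀ ε : ℝ, 0 < ε → ∃ N : ℕ, ∀ n ≥ N, ∀ x, |Ψn n x - Ψ x| ≤ ε * ‖x‖ := by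
  -- each Ψn vanishes at 0
  have hzero : ∀ n, Ψn n 0 = 0 := by
    intro n
    have := hcon n 0 le_rfl 0
    simpa using this
  -- monotone in n
  have hmon : ∀ x, Monotone fun n => Ψn n x := by
    intro x
    exact monotone_nat_of_le_succ fun n => hmono n x
  -- Ψn n x + Ψn n (-x) ≤ 0
  have hsum : ∀ n x, Ψn n x + Ψn n (-x) ≤ 0 := by
    intro n x
    have h := (hcv n).2 (mem_univ x) (mem_univ (-x))
      (by norm_num : (0:ℝ) ≤ 1/2) (by norm_num : (0:ℝ) ≤ 1/2) (by norm_num)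
    simp only [smul_eq_mul] at h
    have hx0 : (1/2 : ℝ) • x + (1/2 : ℝ) • (-x) = 0 := by
      simp [smul_neg]
    rw [hx0, hzero n] at h
    linarith
  -- bounded above
  have hbdd : ∀ x, BddAbove (Set.range fun n => Ψn n x) := by
    intro x
    refine ⟨-Ψn 0 (-x), ?_⟩
    rintro y ⟨n, rfl⟩
    have h1 : Ψn 0 (-x) ≤ Ψn n (-x) := hmon (-x) (Nat.zero_le n)
    have := hsum n x
    linarith
  set Ψ : EuclideanSpace ℝ (Fin d) → ℝ := fun x => ⨆ n, Ψn n x with hΨ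
  have htend : ∀ x, Filter.Tendsto (fun n => Ψn n x) Filter.atTop (nhds (Ψ x)) := by
    intro x
    exact tendsto_atTop_ciSup (hmon x) (hbdd x)
  have hle : ∀ n x, Ψn n x ≤ Ψ x := fun n x => le_ciSup (hbdd x) n
  -- conical
  have hconΨ : Conical d Ψ := by
    intro c hc0 x
    have h1 : Filter.Tendsto (fun n => Ψn n (c • x)) Filter.atTop (nhds (Ψ (c • x))) :=
      htend (c • x)
    have h2 : Filter.Tendsto (fun n => Ψn n (c • x)) Filter.atTop (nhds (c * Ψ x)) := by
      have : (fun n => Ψn n (c • x)) = fun n => c * Ψn n x := by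
        funext n; exact hcon n c hc0 x
      rw [this]
      exact (htend x).const_mul c
    exact tendsto_nhds_unique h1 h2
  -- concave
  have hcvΨ : ConcaveOn ℝ Set.univ Ψ := by
    refine ⟨convex_univ, ?_⟩
    intro x _ y _ a b ha hb hab
    have h1 : Filter.Tendsto (fun n => a • Ψn n x + b • Ψn n y) Filter.atTop
        (nhds (a • Ψ x + b • Ψ y)) :=
      (((htend x).const_mul a).add ((htend y).const_mul b))
    refine le_of_tendsto h1 ?_
    filter_upwards with n
    exact le_trans ((hcv n).2 (mem_univ x) (mem_univ y) ha hb hab) (hle n _)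
  -- continuous
  have hcΨ : Continuous Ψ := by
    have hconv : ConvexOn ℝ Set.univ (fun x => -Ψ x) := hcvΨ.neg
    have h1 := hconv.continuousOn isOpen_univ
    rw [continuousOn_univ] at h1
    have h2 : Continuous fun x => -(-Ψ x) := h1.neg
    simpa using h2
  refine ⟨Ψ, hcΨ, hconΨ, hcvΨ, ?_⟩
  intro ε hε
  -- uniform convergence on the sphere via compactness (Dini)
  set S : Set (EuclideanSpace ℝ (Fin d)) := Metric.sphere 0 1 with hS
  have hScompact : IsCompact S := isCompact_sphere 0 1
  set U : ℕ → Set (EuclideanSpace ℝ (Fin d)) := fun n => {x | Ψ x - Ψn n x < ε} with hU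
  have hUopen : ∀ n, IsOpen (U n) := fun n =>
    isOpen_lt ((hcΨ.sub (hc n))) continuous_const
  have hcover : S ⊆ ⋃ n, U n := by
    intro x _
    have := htend x
    have h2 : Filter.Tendsto (fun n => Ψ x - Ψn n x) Filter.atTop (nhds 0) := by
      have := (tendsto_const_nhds (x := Ψ x) (f := Filter.atTop (α := ℕ))).sub (htend x)
      simpa using this
    have h3 : ∀ᶠ n in Filter.atTop, Ψ x - Ψn n x < ε :=
      (h2.eventually (eventually_lt_nhds hε))
    obtain ⟨n, hn⟩ := h3.exists
    exact Set.mem_iUnion.2 ⟨n, hn⟩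
  obtain ⟨t, ht⟩ := hScompact.elim_finite_subcover U hUopen hcover
  -- U is monotone
  have hUmono : Monotone U := by
    intro m n hmn x hx
    have : Ψn m x ≤ Ψn n x := hmon x hmn
    simp only [hU, Set.mem_setOf_eq] at hx ⊢
    linarith
  rcases t.eq_empty_or_nonempty with rfl | hne
  · refine ⟨0, fun n _ x => ?_⟩
    exfalso
    -- sphere is nonempty since d ≥ 1, contradiction with empty cover
    haveI : Nontrivial (EuclideanSpace ℝ (Fin d)) :=
      Module.nontrivial_of_finrank_pos (R := ℝ)
        (by rw [finrank_euclideanSpace_fin]; omega)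
    have : S.Nonempty := NormedSpace.sphere_nonempty.2 (by norm_num)
    obtain ⟨y, hy⟩ := this
    simpa using ht hy
  · obtain ⟨N, hN⟩ := t.exists_le
    refine ⟨N, fun n hn x => ?_⟩
    rcases eq_or_ne x 0 with rfl | hx0
    · have h1 : Ψn n 0 = 0 := hzero n
      have h2 : Ψ 0 = 0 := by
        have := hconΨ 0 le_rfl 0
        simpa using this
      simp [h1, h2]
    · have hxnorm : 0 < ‖x‖ := norm_pos_iff.2 hx0
      set u : EuclideanSpace ℝ (Fin d) := ‖x‖⁻¹ • x with hu
      have huS : u ∈ S := by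
        simp [hS, hu, norm_smul, abs_of_nonneg (inv_nonneg.2 hxnorm.le),
          inv_mul_cancel₀ hxnorm.ne']
      have huU : u ∈ U n := by
        obtain ⟨i, hi, hiu⟩ := Set.mem_iUnion₂.1 (ht huS)
        exact hUmono (le_trans (hN i hi) hn) hiu
      have hlt : Ψ u - Ψn n u < ε := huU
      have hxu : x = ‖x‖ • u := by
        rw [hu, smul_smul, mul_inv_cancel₀ hxnorm.ne', one_smul]
      have e1 : Ψn n x = ‖x‖ * Ψn n u := by
        conv_lhs => rw [hxu]
        exact hcon n _ hxnorm.le u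
      have e2 : Ψ x = ‖x‖ * Ψ u := by
        conv_lhs => rw [hxu]
        exact hconΨ _ hxnorm.le u
      have hle' : Ψn n x ≤ Ψ x := hle n x
      rw [abs_sub_comm, abs_of_nonneg (by linarith)]
      rw [e1, e2]
      have : ‖x‖ * Ψ u - ‖x‖ * Ψn n u = ‖x‖ * (Ψ u - Ψn n u) := by ring
      rw [this]
      have := mul_le_mul_of_nonneg_left hlt.le hxnorm.le
      linarith [mul_comm ε ‖x‖]
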